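/- arXiv:1606.03587 — 6 statements merged into one kernel-verified Lean document; each statement's English description precedes it below -/
import Mathlib

section
/- Let R be a (possibly noncommutative) ring, let n ≥ 1, let A = (a₁,…,aₙ) be a row vector over R, let B be an n×n matrix over R, and let C = (c₁,…,cₙ)ᵗ be a column vector over R. Consider the complex of modules 0 → R → Rⁿ → Rⁿ → R → 0 whose maps are r ↦ (cᵢ·r)ᵢ, v ↦ B·v (matrix–vector product over R), and v ↦ ∑ⱼ aⱼ·vⱼ. Assume the row–matrix product A·B is zero, the matrix–column product B·C is zero, and that a₁ and c₁ are units of R. Let B' be the (n−1)×(n−1) submatrix of B obtained by deleting the first row and the first column of B. Then B' has a two-sided inverse over R if and only if the complex is acyclic, i.e.: the map r ↦ (cᵢ·r)ᵢ is injective, the kernel of v ↦ B·v equals the image of r ↦ (cᵢ·r)ᵢ, the kernel of v ↦ ∑ⱼ aⱼ·vⱼ equals the image of v ↦ B·v, and the map v ↦ ∑ⱼ aⱼ·vⱼ is surjective. -/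
section aux
variable {R : Type*} [Ring R] {n : ℕ}

lemma aux_AB (A : Fin (n + 1) → R) (B : Matrix (Fin (n + 1)) (Fin (n + 1)) R)
    (hAB : ∀ j, ∑ i, A i * B i j = 0) (v : Fin (n + 1) → R) :
    ∑ j, A j * (B.mulVec v) j = 0 := by
  simp only [Matrix.mulVec, dotProduct, Finset.mul_sum, ← mul_assoc]
  rw [Finset.sum_comm]
  simp [← Finset.sum_mul, hAB]

lemma aux_BC (B : Matrix (Fin (n + 1)) (Fin (n + 1)) R) (C : Fin (n + 1) → R)
    (hBC : B.mulVec C = 0) (r : R) :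
    B.mulVec (fun i => C i * r) = 0 := by
  funext i
  have h := congrFun hBC i
  simp only [Matrix.mulVec, dotProduct, Pi.zero_apply] at h ⊢
  simp only [← mul_assoc, ← Finset.sum_mul, h, zero_mul]

lemma aux_succ (B : Matrix (Fin (n + 1)) (Fin (n + 1)) R) (w : Fin (n + 1) → R) (i : Fin n) :
    (B.mulVec w) i.succ = B i.succ 0 * w 0 +
      ((B.submatrix Fin.succ Fin.succ).mulVec (fun j => w j.succ)) i := by
  simp [Matrix.mulVec, dotProduct, Fin.sum_univ_succ]

end aux

/-- Lemma 2.3 of the paper, equivalence (1) ⟺ (2).  Let `R` be a ring, `n ≥ 1`, and let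
`0 → R → Rⁿ → Rⁿ → R → 0` be a complex whose maps are given by a column vector `C`,
an `n × n` matrix `B` and a row vector `A`, with `a₁` and `c₁` units.  Then the submatrix
`B'` of `B` obtained by deleting the first row and column is invertible (has a two-sided
inverse) if and only if the complex is acyclic. -/
theorem submatrix_invertible_iff_acyclic (R : Type*) [Ring R] (n : ℕ)
    (A : Fin (n + 1) → R) (B : Matrix (Fin (n + 1)) (Fin (n + 1)) R) (C : Fin (n + 1) → R)
    (hAB : ∀ j, ∑ i, A i * B i j = 0)
    (hBC : B.mulVec C = 0)
    (ha : IsUnit (A 0)) (hc : IsUnit (C 0)) :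
    (∃ D : Matrix (Fin n) (Fin n) R,
        B.submatrix Fin.succ Fin.succ * D = 1 ∧ D * B.submatrix Fin.succ Fin.succ = 1) ↔
      (Function.Injective (fun r : R => fun i : Fin (n + 1) => C i * r) ∧
       {v : Fin (n + 1) → R | B.mulVec v = 0} =
          Set.range (fun r : R => fun i : Fin (n + 1) => C i * r) ∧
       {v : Fin (n + 1) → R | ∑ j, A j * v j = 0} =
          Set.range (fun v : Fin (n + 1) → R => B.mulVec v) ∧
       Function.Surjective (fun v : Fin (n + 1) → R => ∑ j, A j * v j)) := by
  obtain ⟨ua, hua⟩ := ha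
  obtain ⟨uc, huc⟩ := hc
  set a' : R := ↑ua⁻¹ with ha'
  set c' : R := ↑uc⁻¹ with hc'
  have haa' : A 0 * a' = 1 := by rw [← hua, ha']; exact_mod_cast ua.mul_inv
  have ha'a : a' * A 0 = 1 := by rw [← hua, ha']; exact_mod_cast ua.inv_mul
  have hcc' : C 0 * c' = 1 := by rw [← huc, hc']; exact_mod_cast uc.mul_inv
  have hc'c : c' * C 0 = 1 := by rw [← huc, hc']; exact_mod_cast uc.inv_mul
  set B' := B.submatrix Fin.succ Fin.succ with hB'
  constructor
  · rintro ⟨D, hD1, hD2⟩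
    refine ⟨?_, ?_, ?_, ?_⟩
    · -- injectivity of r ↦ C·r
      intro r s h
      have h0 : C 0 * r = C 0 * s := congrFun h 0
      calc r = c' * (C 0 * r) := by rw [← mul_assoc, hc'c, one_mul]
        _ = c' * (C 0 * s) := by rw [h0]
        _ = s := by rw [← mul_assoc, hc'c, one_mul]
    · -- ker B = range C
      ext v
      simp only [Set.mem_setOf_eq, Set.mem_range]
      constructor
      · intro hv
        refine ⟨c' * v 0, ?_⟩
        set w : Fin (n + 1) → R := v - fun i => C i * (c' * v 0) with hwdef
        have hw0 : w 0 = 0 := by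
          simp only [hwdef, Pi.sub_apply, ← mul_assoc, hcc', one_mul, sub_self]
        have hBw : B.mulVec w = 0 := by
          rw [hwdef, Matrix.mulVec_sub, hv, aux_BC B C hBC, sub_zero]
        have htail : ∀ i : Fin n, w i.succ = 0 := by
          have hB'w : B'.mulVec (fun j => w j.succ) = 0 := by
            funext i
            have := aux_succ B w i
            rw [congrFun hBw i.succ, hw0, mul_zero, zero_add] at this
            exact this.symm
          intro i
          have : (fun j => w j.succ) = D.mulVec (B'.mulVec (fun j => w j.succ)) := by
            rw [Matrix.mulVec_mulVec, hD2, Matrix.one_mulVec]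
          rw [congrFun this i, hB'w, Matrix.mulVec_zero]
          rfl
        funext i
        induction i using Fin.cases with
        | zero =>
          have := hw0
          simp only [hwdef, Pi.sub_apply, sub_eq_zero] at this
          exact this.symm
        | succ i =>
          have := htail i
          simp only [hwdef, Pi.sub_apply, sub_eq_zero] at this
          exact this.symm
      · rintro ⟨r, rfl⟩
        exact aux_BC B C hBC r
    · -- ker A = range B
      ext v
      simp only [Set.mem_setOf_eq, Set.mem_range]
      constructor
      · intro hv
        set w : Fin (n + 1) → R := Fin.cases 0 (D.mulVec (fun j => v j.succ)) with hwdef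
        refine ⟨w, ?_⟩
        have hw0 : w 0 = 0 := rfl
        have hwt : (fun j => w j.succ) = D.mulVec (fun j => v j.succ) := by
          funext j; simp [hwdef]
        have hsucc : ∀ i : Fin n, (B.mulVec w) i.succ = v i.succ := by
          intro i
          rw [aux_succ, hw0, mul_zero, zero_add, hwt, Matrix.mulVec_mulVec, ← hB', hD1,
            Matrix.one_mulVec]
        have hA := aux_AB A B hAB w
        rw [Fin.sum_univ_succ] at hA hv
        have hsum : ∑ j : Fin n, A j.succ * (B.mulVec w) j.succ
            = ∑ j : Fin n, A j.succ * v j.succ := by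
          refine Finset.sum_congr rfl fun j _ => by rw [hsucc]
        rw [hsum] at hA
        have he : A 0 * (B.mulVec w) 0 = A 0 * v 0 := add_right_cancel (hA.trans hv.symm)
        have h0 : (B.mulVec w) 0 = v 0 := by
          calc (B.mulVec w) 0 = a' * (A 0 * (B.mulVec w) 0) := by rw [← mul_assoc, ha'a, one_mul]
            _ = a' * (A 0 * v 0) := by rw [he]
            _ = v 0 := by rw [← mul_assoc, ha'a, one_mul]
        funext i
        induction i using Fin.cases with
        | zero => exact h0
        | succ i => exact hsucc i
      · rintro ⟨u, rfl⟩
        exact aux_AB A B hAB u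
    · -- surjectivity
      intro r
      refine ⟨fun i => if i = 0 then a' * r else 0, ?_⟩
      simp [Fin.sum_univ_succ, Fin.succ_ne_zero, ← mul_assoc, haa']
  · rintro ⟨hinj, hker1, hker2, hsurj⟩
    -- injectivity of v ↦ B'.mulVec v
    have hBinj : ∀ x : Fin n → R, B'.mulVec x = 0 → x = 0 := by
      intro x hx
      set w : Fin (n + 1) → R := fun i => Fin.cases 0 x i with hwdef
      have hw0 : w 0 = 0 := rfl
      have htail : ∀ i : Fin n, w i.succ = x i := fun i => by simp [hwdef]
      have hsucc : ∀ i : Fin n, (B.mulVec w) i.succ = 0 := by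
        intro i
        rw [aux_succ, hw0, mul_zero, zero_add]
        have hxt : (fun j => w j.succ) = x := funext htail
        rw [hxt]
        exact congrFun hx i
      have hA := aux_AB A B hAB w
      rw [Fin.sum_univ_succ] at hA
      have hs0 : ∑ j : Fin n, A j.succ * (B.mulVec w) j.succ = 0 :=
        Finset.sum_eq_zero fun j _ => by rw [hsucc, mul_zero]
      rw [hs0, add_zero] at hA
      have h0 : (B.mulVec w) 0 = 0 := by
        calc (B.mulVec w) 0 = a' * (A 0 * (B.mulVec w) 0) := by rw [← mul_assoc, ha'a, one_mul]
          _ = 0 := by rw [hA, mul_zero]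
      have hBw : B.mulVec w = 0 := by
        funext i
        induction i using Fin.cases with
        | zero => exact h0
        | succ i => exact hsucc i
      have hmem : w ∈ Set.range (fun r : R => fun i : Fin (n + 1) => C i * r) := by
        rw [← hker1]; exact hBw
      obtain ⟨r, hr⟩ := hmem
      have hCr : C 0 * r = 0 := by
        have := congrFun hr 0
        simpa [hw0] using this
      have hr0 : r = 0 := by
        calc r = c' * (C 0 * r) := by rw [← mul_assoc, hc'c, one_mul]
          _ = 0 := by rw [hCr, mul_zero]
      have hr' : (fun i => C i * r) = w := hr
      funext i
      show x i = 0
      rw [← htail i, ← congrFun hr' i.succ, hr0, mul_zero]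
    -- construct the right inverse columnwise
    have hcol : ∀ k : Fin n, ∃ y : Fin n → R,
        B'.mulVec y = fun i => if i = k then 1 else 0 := by
      intro k
      set v : Fin (n + 1) → R :=
        fun i => Fin.cases (-(a' * A k.succ)) (fun j => if j = k then (1 : R) else 0) i with hvdef
      have hv0 : v 0 = -(a' * A k.succ) := rfl
      have hvt : ∀ j : Fin n, v j.succ = if j = k then 1 else 0 := fun j => by simp [hvdef]
      have hAv : ∑ j, A j * v j = 0 := by
        rw [Fin.sum_univ_succ, hv0]
        have hss : ∑ j : Fin n, A j.succ * v j.succ = A k.succ := by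
          simp only [hvt, mul_ite, mul_one, mul_zero]
          simp [Finset.sum_ite_eq']
        rw [hss, mul_neg, ← mul_assoc, haa', one_mul, neg_add_cancel]
      have hmem : v ∈ Set.range (fun u : Fin (n + 1) → R => B.mulVec u) := by
        rw [← hker2]; exact hAv
      obtain ⟨u, hu'⟩ := hmem
      have hu : B.mulVec u = v := hu'
      set w : Fin (n + 1) → R := u - fun i => C i * (c' * u 0) with hwdef
      have hBw : B.mulVec w = v := by
        rw [hwdef, Matrix.mulVec_sub, hu, aux_BC B C hBC, sub_zero]
      have hw0 : w 0 = 0 := by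
        simp only [hwdef, Pi.sub_apply, ← mul_assoc, hcc', one_mul, sub_self]
      refine ⟨fun j => w j.succ, ?_⟩
      funext i
      show B'.mulVec (fun j => w j.succ) i = if i = k then 1 else 0
      have h := aux_succ B w i
      rw [hw0, mul_zero, zero_add, hBw] at h
      rw [← h]
      exact hvt i
    choose Y hY using hcol
    set D : Matrix (Fin n) (Fin n) R := Matrix.of fun j k => Y k j with hDdef
    have hD1 : B' * D = 1 := by
      ext i k
      have h := congrFun (hY k) i
      simp only [Matrix.mulVec, dotProduct] at h
      simp only [Matrix.mul_apply, Matrix.one_apply, hDdef, Matrix.of_apply]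
      exact h
    have key : ∀ x : Fin n → R, (D * B').mulVec x = x := by
      intro x
      have h1 : B'.mulVec ((D * B').mulVec x - x) = 0 := by
        rw [Matrix.mulVec_sub, Matrix.mulVec_mulVec, ← mul_assoc, hD1, one_mul, sub_self]
      exact sub_eq_zero.mp (hBinj _ h1)
    have hD2 : D * B' = 1 := by
      ext i k
      have h := congrFun (key fun j => if j = k then 1 else 0) i
      simpa [Matrix.mulVec, dotProduct, Matrix.one_apply, mul_ite,
        Finset.sum_ite_eq'] using h
    exact ⟨D, hD1, hD2⟩
end

section
/- Let R be a stably finite (possibly noncommutative) ring, let n ≥ 1, let A = (a₁,…,aₙ) be a row vector over R, let B be an n×n matrix over R, and let C = (c₁,…,cₙ)ᵗ be a column vector over R. Assume the row–matrix product A·B is zero, the matrix–column product B·C is zero, and that a₁ and c₁ are units of R. Let B' be the (n−1)×(n−1) submatrix of B obtained by deleting the first row and the first column of B. Then B' has a two-sided inverse over R if and only if the kernel of the map v ↦ ∑ⱼ aⱼ·vⱼ from Rⁿ to R equals the image of the map v ↦ B·v from Rⁿ to Rⁿ (i.e. the first homology of the complex 0 → R → Rⁿ → Rⁿ → R → 0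 with differentials given by C, B, A vanishes). -/
/-- Lemma 2.3 of the paper, equivalence (1) ⟺ (3).  Let `R` be a stably finite ring,
`n ≥ 1`, and let `0 → R → Rⁿ → Rⁿ → R → 0` be a complex whose maps are given by a column
vector `C`, an `n × n` matrix `B` and a row vector `A`, with `a₁` and `c₁` units.  Then the
submatrix `B'` of `B` obtained by deleting the first row and column has a two-sided inverse
over `R` if and only if the first homology of the complex vanishes, i.e. the kernel of
`v ↦ A ⬝ v` equals the image of `v ↦ B ⬝ v`. -/
theorem submatrix_invertible_iff_H1_vanishes (R : Type*) [Ring R]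
    (hsf : ∀ (m : ℕ) (X Y : Matrix (Fin m) (Fin m) R), X * Y = 1 → Y * X = 1)
    (n : ℕ)
    (A : Fin (n + 1) → R) (B : Matrix (Fin (n + 1)) (Fin (n + 1)) R) (C : Fin (n + 1) → R)
    (hAB : ∀ j, ∑ i, A i * B i j = 0)
    (hBC : B.mulVec C = 0)
    (ha : IsUnit (A 0)) (hc : IsUnit (C 0)) :
    (∃ D : Matrix (Fin n) (Fin n) R,
        B.submatrix Fin.succ Fin.succ * D = 1 ∧ D * B.submatrix Fin.succ Fin.succ = 1) ↔
      {v : Fin (n + 1) → R | ∑ j, A j * v j = 0} =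
        Set.range (fun v : Fin (n + 1) → R => B.mulVec v) := by
  constructor
  · rintro ⟨D, hBD, hDB⟩
    have key : ∀ k l : Fin n, ∑ j, B k.succ j.succ * D j l = if k = l then 1 else 0 := by
      intro k l
      have := congrFun (congrFun hBD k) l
      simpa [Matrix.mul_apply, Matrix.one_apply, Matrix.submatrix] using this
    ext v
    simp only [Set.mem_setOf_eq, Set.mem_range]
    constructor
    · intro hv
      set X : Fin n → R := fun j => ∑ l, D j l * v l.succ with hX
      have tail : ∀ k : Fin n, ∑ j : Fin n, B k.succ j.succ * X j = v k.succ := by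
        intro k
        calc ∑ j : Fin n, B k.succ j.succ * X j
            = ∑ j : Fin n, ∑ l, B k.succ j.succ * D j l * v l.succ := by
              simp [hX, Finset.mul_sum, mul_assoc]
          _ = ∑ l, (∑ j, B k.succ j.succ * D j l) * v l.succ := by
              rw [Finset.sum_comm]
              simp [Finset.sum_mul]
          _ = v k.succ := by simp [key, ite_mul]
      refine ⟨fun i => Fin.cases 0 X i, ?_⟩
      funext i
      have hBw : B.mulVec (fun i => Fin.cases 0 X i) i
          = ∑ j : Fin n, B i j.succ * X j := by
        simp [Matrix.mulVec, dotProduct, Fin.sum_univ_succ]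
      rw [hBw]
      refine Fin.cases ?_ (fun k => tail k) i
      -- head case: multiply by the unit A 0
      refine ha.mul_left_cancel ?_
      have hv' := hv
      rw [Fin.sum_univ_succ] at hv'
      have hcol : ∀ j : Fin n, A 0 * B 0 j.succ = -∑ k : Fin n, A k.succ * B k.succ j.succ := by
        intro j
        have h2 := hAB j.succ
        rw [Fin.sum_univ_succ] at h2
        exact eq_neg_of_add_eq_zero_left h2
      calc A 0 * ∑ j : Fin n, B 0 j.succ * X j
          = ∑ j : Fin n, (A 0 * B 0 j.succ) * X j := by
            simp [Finset.mul_sum, mul_assoc]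
        _ = ∑ j : Fin n, (-∑ k : Fin n, A k.succ * B k.succ j.succ) * X j := by
            simp only [hcol]
        _ = ∑ j : Fin n, ∑ k : Fin n, -(A k.succ * (B k.succ j.succ * X j)) := by
            simp [Finset.sum_mul, mul_assoc]
        _ = ∑ k : Fin n, ∑ j : Fin n, -(A k.succ * (B k.succ j.succ * X j)) :=
            Finset.sum_comm
        _ = -∑ k : Fin n, A k.succ * ∑ j : Fin n, B k.succ j.succ * X j := by
            simp [Finset.mul_sum]
        _ = -∑ k : Fin n, A k.succ * v k.succ := by simp only [tail]
        _ = A 0 * v 0 := neg_eq_of_add_eq_zero_left hv'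
    · rintro ⟨w, rfl⟩
      calc ∑ j, A j * B.mulVec w j
          = ∑ j, ∑ i, A j * (B j i * w i) := by
            simp [Matrix.mulVec, dotProduct, Finset.mul_sum]
        _ = ∑ i, (∑ j, A j * B j i) * w i := by
            rw [Finset.sum_comm]
            simp [Finset.sum_mul, mul_assoc]
        _ = 0 := by simp [hAB]
  · intro h
    have hv : ∀ j : Fin n, ∃ w : Fin (n + 1) → R,
        B.mulVec w = fun i => Fin.cases (-(↑ha.unit⁻¹ * A j.succ)) (fun k => if k = j then 1 else 0) i := by
      intro j
      have hmem : (fun i => Fin.cases (-(↑ha.unit⁻¹ * A j.succ)) (fun k => if k = j then (1:R) else 0) i)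
          ∈ {v : Fin (n + 1) → R | ∑ j, A j * v j = 0} := by
        simp only [Set.mem_setOf_eq]
        rw [Fin.sum_univ_succ]
        simp [mul_ite, ← mul_assoc, ha.mul_val_inv]
      rw [h] at hmem
      obtain ⟨w, hw⟩ := hmem
      exact ⟨w, hw⟩
    choose w hw using hv
    set D : Matrix (Fin n) (Fin n) R :=
      fun l j => w j l.succ - C l.succ * ↑hc.unit⁻¹ * w j 0 with hD
    have hgamma : ∀ k : Fin n, B k.succ 0 * C 0 = -∑ l : Fin n, B k.succ l.succ * C l.succ := by
      intro k
      have h2 := congrFun hBC k.succ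
      simp only [Matrix.mulVec, dotProduct, Pi.zero_apply] at h2
      rw [Fin.sum_univ_succ] at h2
      exact eq_neg_of_add_eq_zero_left h2
    have hBD : B.submatrix Fin.succ Fin.succ * D = 1 := by
      ext k j
      have hwk : B k.succ 0 * w j 0 + ∑ l : Fin n, B k.succ l.succ * w j l.succ
          = if k = j then 1 else 0 := by
        have h2 := congrFun (hw j) k.succ
        simp only [Matrix.mulVec, dotProduct] at h2
        rw [Fin.sum_univ_succ] at h2
        simpa using h2
      have hB0 : B k.succ 0 = (-∑ l : Fin n, B k.succ l.succ * C l.succ) * ↑hc.unit⁻¹ := by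
        have h1 : B k.succ 0 * C 0 * ↑hc.unit⁻¹ = B k.succ 0 := by
          rw [mul_assoc]
          simp [hc.mul_val_inv]
        rw [← h1, hgamma k]
      simp only [Matrix.mul_apply, Matrix.submatrix_apply, hD, Matrix.one_apply]
      calc ∑ l : Fin n, B k.succ l.succ * (w j l.succ - C l.succ * ↑hc.unit⁻¹ * w j 0)
          = (∑ l : Fin n, B k.succ l.succ * w j l.succ)
            - (∑ l : Fin n, B k.succ l.succ * C l.succ) * (↑hc.unit⁻¹ * w j 0) := by
            simp [mul_sub, Finset.sum_sub_distrib, Finset.sum_mul, mul_assoc]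
        _ = (∑ l : Fin n, B k.succ l.succ * w j l.succ) + B k.succ 0 * w j 0 := by
            rw [hB0]
            simp [neg_mul, mul_assoc, sub_eq_add_neg]
        _ = if k = j then 1 else 0 := by rw [← hwk, add_comm]
    exact ⟨D, hBD, hsf n _ D hBD⟩
end

section
/- Let R be a stably finite (possibly noncommutative) ring, let n ≥ 1, let A = (a₁,…,aₙ) be a row vector over R, and let B be an n×(n−1) matrix over R. Assume the row–matrix product A·B is zero and that a₁ is a unit of R. Let B' be the (n−1)×(n−1) submatrix of B obtained by deleting the first row of B. Then the following are equivalent: (i) B' has a two-sided inverse over R; (ii) the complex 0 → R^{n−1} → Rⁿ → R → 0 with maps w ↦ B·w and v ↦ ∑ⱼ aⱼ·vⱼ is acyclic, i.e. w ↦ B·w is injective, the kernel of v ↦ ∑ⱼ aⱼ·vⱼ equals the image of w ↦ B·w, and v ↦ ∑ⱼ aⱼ·vⱼ is surjective; (iii) the kernel of v ↦ ∑ⱼ aⱼ·vⱼ equals the image of w ↦ B·w. -/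
/-- The analogue of Lemma 2.3 of the paper for chain complexes of length two.  Let `R` be a
stably finite ring, `n ≥ 1`, `A` a row vector of length `n` with `a₁` a unit, and `B` an
`n × (n-1)` matrix with `A · B = 0`.  Let `B'` be the `(n-1) × (n-1)` matrix obtained from
`B` by deleting the first row.  Then: `B'` has a two-sided inverse over `R` iff the complex
`0 → R^{n-1} → Rⁿ → R → 0` is acyclic, and this in turn holds iff the kernel of
`v ↦ ∑ⱼ aⱼ vⱼ` equals the image of `w ↦ B ⬝ w`. -/
theorem submatrix_invertible_iff_acyclic_length_two (R : Type*) [Ring R]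
    (hsf : ∀ (m : ℕ) (X Y : Matrix (Fin m) (Fin m) R), X * Y = 1 → Y * X = 1)
    (n : ℕ)
    (A : Fin (n + 1) → R) (B : Matrix (Fin (n + 1)) (Fin n) R)
    (hAB : ∀ j, ∑ i, A i * B i j = 0)
    (ha : IsUnit (A 0)) :
    ((∃ D : Matrix (Fin n) (Fin n) R,
        B.submatrix Fin.succ id * D = 1 ∧ D * B.submatrix Fin.succ id = 1) ↔
      (Function.Injective (fun w : Fin n → R => B.mulVec w) ∧
       {v : Fin (n + 1) → R | ∑ j, A j * v j = 0} =
          Set.range (fun w : Fin n → R => B.mulVec w) ∧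
       Function.Surjective (fun v : Fin (n + 1) → R => ∑ j, A j * v j))) ∧
    ((∃ D : Matrix (Fin n) (Fin n) R,
        B.submatrix Fin.succ id * D = 1 ∧ D * B.submatrix Fin.succ id = 1) ↔
      {v : Fin (n + 1) → R | ∑ j, A j * v j = 0} =
        Set.range (fun w : Fin n → R => B.mulVec w)) := by
  obtain ⟨u, hu⟩ := ha
  have hB'mul : ∀ (w : Fin n → R) (i : Fin n),
      (B.submatrix Fin.succ id).mulVec w i = B.mulVec w i.succ := by
    intro w i
    simp [Matrix.mulVec, dotProduct, Matrix.submatrix]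
  have key : ∀ w : Fin n → R, ∑ i, A i * B.mulVec w i = 0 := by
    intro w
    have : ∑ i, A i * B.mulVec w i = ∑ j, (∑ i, A i * B i j) * w j := by
      simp_rw [Matrix.mulVec, dotProduct, Finset.mul_sum, Finset.sum_mul, mul_assoc]
      exact Finset.sum_comm
    rw [this]
    simp [hAB]
  have h1 : (∃ D : Matrix (Fin n) (Fin n) R,
        B.submatrix Fin.succ id * D = 1 ∧ D * B.submatrix Fin.succ id = 1) →
      (Function.Injective (fun w : Fin n → R => B.mulVec w) ∧
       {v : Fin (n + 1) → R | ∑ j, A j * v j = 0} =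
          Set.range (fun w : Fin n → R => B.mulVec w) ∧
       Function.Surjective (fun v : Fin (n + 1) → R => ∑ j, A j * v j)) := by
    rintro ⟨D, hBD, hDB⟩
    refine ⟨?_, ?_, ?_⟩
    · intro w1 w2 h
      simp only at h
      have h' : (B.submatrix Fin.succ id).mulVec w1 = (B.submatrix Fin.succ id).mulVec w2 := by
        funext i
        rw [hB'mul, hB'mul]
        exact congrFun h i.succ
      have h2 := congrArg (D.mulVec ·) h'
      simpa [Matrix.mulVec_mulVec, hDB, Matrix.one_mulVec] using h2
    · ext v
      constructor
      · intro hv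
        simp only [Set.mem_setOf_eq] at hv
        set w := D.mulVec (fun i => v i.succ) with hwdef
        have hsucc : ∀ i : Fin n, B.mulVec w i.succ = v i.succ := by
          intro i
          rw [← hB'mul, hwdef, Matrix.mulVec_mulVec, hBD, Matrix.one_mulVec]
        refine ⟨w, ?_⟩
        have h0 : A 0 * B.mulVec w 0 = A 0 * v 0 := by
          have k1 := key w
          rw [Fin.sum_univ_succ] at k1 hv
          have hs : ∑ i : Fin n, A i.succ * B.mulVec w i.succ
              = ∑ i : Fin n, A i.succ * v i.succ :=
            Finset.sum_congr rfl fun i _ => by rw [hsucc]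
          rw [hs] at k1
          exact add_right_cancel (k1.trans hv.symm)
        have h0' : B.mulVec w 0 = v 0 := by
          rw [← hu] at h0
          exact (Units.mul_right_inj u).mp h0
        funext i
        refine Fin.cases ?_ ?_ i
        · exact h0'
        · exact hsucc
      · rintro ⟨w, rfl⟩
        exact key w
    · intro r
      refine ⟨fun i => if i = 0 then ↑u⁻¹ * r else 0, ?_⟩
      simp [Fin.sum_univ_succ, Fin.succ_ne_zero, ← hu]
  have h2 : ({v : Fin (n + 1) → R | ∑ j, A j * v j = 0} =
        Set.range (fun w : Fin n → R => B.mulVec w)) →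
      (∃ D : Matrix (Fin n) (Fin n) R,
        B.submatrix Fin.succ id * D = 1 ∧ D * B.submatrix Fin.succ id = 1) := by
    intro hk
    have hv : ∀ k : Fin n, ∃ w : Fin n → R,
        B.mulVec w = Fin.cases (-(↑u⁻¹ * A k.succ)) (fun j => if j = k then 1 else 0) := by
      intro k
      have hmem : (Fin.cases (-(↑u⁻¹ * A k.succ)) (fun j => if j = k then 1 else 0) :
          Fin (n + 1) → R) ∈ {v : Fin (n + 1) → R | ∑ j, A j * v j = 0} := by
        simp only [Set.mem_setOf_eq]
        rw [Fin.sum_univ_succ]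
        simp only [Fin.cases_zero, Fin.cases_succ, mul_ite, mul_one, mul_zero]
        rw [Finset.sum_ite_eq' Finset.univ k (fun i => A i.succ)]
        simp only [Finset.mem_univ, if_pos]
        rw [← hu, mul_neg, ← mul_assoc, Units.mul_inv, one_mul, neg_add_cancel]
      rw [hk] at hmem
      exact hmem
    choose w hw using hv
    have hBD : B.submatrix Fin.succ id * Matrix.of (fun j k => w k j) = 1 := by
      ext i k
      have he : (B.submatrix Fin.succ id * Matrix.of fun j k => w k j) i k
          = (B.submatrix Fin.succ id).mulVec (w k) i := by
        simp [Matrix.mul_apply, Matrix.mulVec, dotProduct]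
      rw [he, hB'mul, hw]
      simp [Matrix.one_apply]
    exact ⟨Matrix.of (fun j k => w k j), hBD, hsf n _ _ hBD⟩
  exact ⟨⟨h1, fun h => h2 h.2.1⟩, ⟨fun h => (h1 h).2.1, h2⟩⟩
end

section
/- Let n ≥ 1, let C be an integer, and let A be an n×n matrix over the ring ℤ((t)) of formal Laurent series over ℤ such that for every entry A_{ij} the coefficient of t^d in A_{ij} vanishes for all d < C. Let A' be the n×n integer matrix whose (i,j) entry is the coefficient of t^C in A_{ij}. Assume that A' is nonzero and non-degenerate, meaning that for every n×n integer matrix B, A'·B = 0 implies B = 0. Then A is invertible over ℤ((t)) if and only if A' is invertible over ℤ. -/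
open HahnSeries PowerSeries

/-- Lemma 2.5 of the paper in the case `Γ = ℤ`.  Let `n ≥ 1`, `C ∈ ℤ`, and let `A` be an
`n × n` matrix over `ℤ((t))` all of whose entries vanish in degrees `< C`.  Let `A'` be the
integer matrix of coefficients of `t^C`.  If `A'` is nonzero and non-degenerate (i.e. `A'·B = 0`
implies `B = 0` for integer matrices `B`), then `A` has a two-sided inverse over `ℤ((t))` if
and only if `A'` has a two-sided inverse over `ℤ`. -/
theorem matrix_invertible_over_laurentSeries_iff (n : ℕ) (hn : 1 ≤ n) (C : ℤ)
    (A : Matrix (Fin n) (Fin n) (LaurentSeries ℤ))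
    (hlow : ∀ i j, ∀ d < C, (A i j).coeff d = 0)
    (A' : Matrix (Fin n) (Fin n) ℤ)
    (hA' : ∀ i j, A' i j = (A i j).coeff C)
    (hne : A' ≠ 0)
    (hnd : ∀ B : Matrix (Fin n) (Fin n) ℤ, A' * B = 0 → B = 0) :
    (∃ D : Matrix (Fin n) (Fin n) (LaurentSeries ℤ), A * D = 1 ∧ D * A = 1) ↔
    (∃ D' : Matrix (Fin n) (Fin n) ℤ, A' * D' = 1 ∧ D' * A' = 1) := by
  have i0 : Fin n := ⟨0, hn⟩
  -- det A' ≠ 0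
  have hdetne : A'.det ≠ 0 := by
    intro h
    obtain ⟨v, hv, hmv⟩ := Matrix.exists_mulVec_eq_zero_iff.mpr h
    apply hv
    have hB := hnd (Matrix.of fun i _ => v i) ?_
    · funext i
      have := congrFun (congrFun hB i) i0
      simpa using this
    · ext i j
      have := congrFun hmv i
      simpa [Matrix.mul_apply, Matrix.mulVec, dotProduct] using this
  -- the power series matrix
  set P : Matrix (Fin n) (Fin n) (PowerSeries ℤ) :=
    fun i j => PowerSeries.mk fun d => (A i j).coeff (C + d) with hP
  have hAeq : A = (single C 1 : LaurentSeries ℤ) • (P.map (ofPowerSeries ℤ ℤ)) := by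
    ext i j d
    have key : ((single C 1 : LaurentSeries ℤ) * ofPowerSeries ℤ ℤ (P i j)).coeff d
        = (A i j).coeff d := by
      have hd : d = (d - C) + C := by ring
      rw [hd, coeff_single_mul_add, one_mul, PowerSeries.coeff_coe]
      split_ifs with hneg
      · exact (hlow i j _ (by linarith)).symm
      · push_neg at hneg
        rw [hP]
        simp only [PowerSeries.coeff_mk]
        congr 1
        omega
    simpa [Matrix.smul_apply, Matrix.map_apply, smul_eq_mul] using key.symm
  have hu : IsUnit (single C 1 : LaurentSeries ℤ) := by
    refine isUnit_iff_exists.mpr ⟨single (-C) 1, ?_, ?_⟩ <;>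
      rw [single_mul_single] <;> simp
  have hdetA : A.det = (single C 1 : LaurentSeries ℤ) ^ n * ofPowerSeries ℤ ℤ P.det := by
    rw [hAeq, Matrix.det_smul, RingHom.map_det]
    simp [smul_eq_mul]
  have hmapP : P.map (PowerSeries.constantCoeff (R := ℤ)) = A' := by
    ext i j
    rw [Matrix.map_apply]
    simp [hP, hA' i j]
  have hconst : PowerSeries.constantCoeff (R := ℤ) P.det = A'.det := by
    rw [RingHom.map_det, RingHom.mapMatrix_apply, hmapP]
  set q : LaurentSeries ℤ := ofPowerSeries ℤ ℤ P.det with hq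
  have hq0 : q.coeff 0 = A'.det := by
    rw [hq, PowerSeries.coeff_coe]
    simpa using hconst
  have hqne : q ≠ 0 := fun h => hdetne (by rw [← hq0, h, HahnSeries.coeff_zero])
  -- key unit equivalence
  have key : IsUnit q ↔ IsUnit A'.det := by
    constructor
    · intro hIsU
      obtain ⟨g, hmul, -⟩ := isUnit_iff_exists.mp hIsU
      have hgne : g ≠ 0 := by
        intro h
        rw [h, mul_zero] at hmul
        exact zero_ne_one hmul
      have hord : q.order + g.order = 0 := by
        have := HahnSeries.order_mul hqne hgne
        rw [hmul, HahnSeries.order_one] at this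
        exact this.symm
      have hlc := HahnSeries.coeff_mul_order_add_order q g
      rw [hord, hmul] at hlc
      have h1 : (1 : LaurentSeries ℤ).coeff 0 = 1 := by
        simp [HahnSeries.coeff_one]
      rw [h1] at hlc
      have hordq : q.order = 0 := by
        refine le_antisymm (HahnSeries.order_le_of_coeff_ne_zero ?_) ?_
        · rw [hq0]; exact hdetne
        · by_contra hlt
          push_neg at hlt
          have : q.coeff q.order = 0 := by
            rw [hq, PowerSeries.coeff_coe, if_pos hlt]
          exact (HahnSeries.leadingCoeff_ne_zero.mpr hqne)
            (by rwa [HahnSeries.leadingCoeff_eq])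
      have : A'.det * g.leadingCoeff = 1 := by
        rw [← hq0, ← hordq, ← HahnSeries.leadingCoeff_eq]
        exact hlc.symm
      exact IsUnit.of_mul_eq_one _ this
    · intro h
      have : IsUnit P.det := PowerSeries.isUnit_iff_constantCoeff.mpr (hconst ▸ h)
      exact this.map (ofPowerSeries ℤ ℤ)
  rw [← isUnit_iff_exists, ← isUnit_iff_exists,
    Matrix.isUnit_iff_isUnit_det, Matrix.isUnit_iff_isUnit_det, hdetA]
  rw [IsUnit.mul_iff]
  simp only [hu.pow, true_and]
  exact key
end

section
/- Let Γ be a group and let φ : Γ → ℚ be a group homomorphism into the additive group of rationals. Assume that the group ring ℤ[Γ] has no zero divisors. For a nonzero element p of ℤ[Γ] with (finite, nonempty) support S ⊆ Γ, define maxdeg_φ(p) = max{φ(g) : g ∈ S} and mindeg_φ(p) = min{φ(g) : g ∈ S}, and deg_φ(p) = maxdeg_φ(p) − mindeg_φ(p). Then for all nonzero p, q in ℤ[Γ] the product p·q is nonzero and satisfies maxdeg_φ(p·q) = maxdeg_φ(p) + maxdeg_φ(q), mindeg_φ(p·q) = mindeg_φ(p) + mindeg_φ(q), and hence deg_φ(p·q)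 = deg_φ(p) + deg_φ(q). -/
private lemma sup_aux (Γ : Type*) [Group Γ] (φ : Γ → ℚ)
    (hφ : ∀ g h : Γ, φ (g * h) = φ g + φ h)
    (hdom : ∀ p q : MonoidAlgebra ℤ Γ, p * q = 0 → p = 0 ∨ q = 0)
    (p q : MonoidAlgebra ℤ Γ) (hp : p ≠ 0) (hq : q ≠ 0) :
    ∃ hpq : p * q ≠ 0,
      (p * q).coeff.support.sup' (Finsupp.support_nonempty_iff.mpr (mt MonoidAlgebra.coeff_eq_zero.mp hpq)) φ =
        p.coeff.support.sup' (Finsupp.support_nonempty_iff.mpr (mt MonoidAlgebra.coeff_eq_zero.mp hp)) φ +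
        q.coeff.support.sup' (Finsupp.support_nonempty_iff.mpr (mt MonoidAlgebra.coeff_eq_zero.mp hq)) φ := by
  classical
  set A := p.coeff.support.sup' (Finsupp.support_nonempty_iff.mpr (mt MonoidAlgebra.coeff_eq_zero.mp hp)) φ with hA
  set B := q.coeff.support.sup' (Finsupp.support_nonempty_iff.mpr (mt MonoidAlgebra.coeff_eq_zero.mp hq)) φ with hB
  set pt : MonoidAlgebra ℤ Γ := MonoidAlgebra.ofCoeff (p.coeff.filter (fun a => φ a = A)) with hptdef
  set qt : MonoidAlgebra ℤ Γ := MonoidAlgebra.ofCoeff (q.coeff.filter (fun a => φ a = B)) with hqtdef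
  have hptmem : ∀ a, a ∈ pt.coeff.support ↔ a ∈ p.coeff.support ∧ φ a = A := by
    intro a
    simp [hptdef, Finsupp.support_filter, Finset.mem_filter]
  have hqtmem : ∀ a, a ∈ qt.coeff.support ↔ a ∈ q.coeff.support ∧ φ a = B := by
    intro a
    simp [hqtdef, Finsupp.support_filter, Finset.mem_filter]
  have hprest : ∀ a ∈ (p - pt).coeff.support, a ∈ p.coeff.support ∧ φ a < A := by
    intro a ha
    have ha' := Finsupp.mem_support_iff.mp ha
    rw [MonoidAlgebra.coeff_sub, Finsupp.sub_apply, hptdef, MonoidAlgebra.coeff_ofCoeff, Finsupp.filter_apply] at ha'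
    by_cases h : φ a = A
    · simp [h] at ha'
    · simp only [if_neg h, sub_zero] at ha'
      refine ⟨Finsupp.mem_support_iff.mpr ha', lt_of_le_of_ne ?_ h⟩
      exact Finset.le_sup' φ (Finsupp.mem_support_iff.mpr ha')
  have hqrest : ∀ a ∈ (q - qt).coeff.support, a ∈ q.coeff.support ∧ φ a < B := by
    intro a ha
    have ha' := Finsupp.mem_support_iff.mp ha
    rw [MonoidAlgebra.coeff_sub, Finsupp.sub_apply, hqtdef, MonoidAlgebra.coeff_ofCoeff, Finsupp.filter_apply] at ha'
    by_cases h : φ a = B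
    · simp [h] at ha'
    · simp only [if_neg h, sub_zero] at ha'
      refine ⟨Finsupp.mem_support_iff.mpr ha', lt_of_le_of_ne ?_ h⟩
      exact Finset.le_sup' φ (Finsupp.mem_support_iff.mpr ha')
  -- key: at top degree, (p*q) agrees with (pt*qt)
  have key : ∀ x : Γ, φ x = A + B → (p * q).coeff x = (pt * qt).coeff x := by
    intro x hx
    have hsplit : pt * qt + (pt * (q - qt) + (p - pt) * q) = p * q := by
      rw [mul_sub, sub_mul]; abel
    have h1 : (pt * (q - qt)).coeff x = 0 := by
      by_contra h
      have hx' : x ∈ (pt * (q - qt)).coeff.support := Finsupp.mem_support_iff.mpr h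
      have hmem := MonoidAlgebra.support_coeff_mul_subset pt (q - qt) hx'
      obtain ⟨a, ha, b, hb, rfl⟩ := Finset.mem_mul.mp hmem
      have hfa : φ a = A := ((hptmem a).mp ha).2
      have hfb : φ b < B := (hqrest b hb).2
      rw [hφ, hfa] at hx
      linarith
    have h2 : ((p - pt) * q).coeff x = 0 := by
      by_contra h
      have hx' : x ∈ ((p - pt) * q).coeff.support := Finsupp.mem_support_iff.mpr h
      have hmem := MonoidAlgebra.support_coeff_mul_subset (p - pt) q hx'
      obtain ⟨a, ha, b, hb, rfl⟩ := Finset.mem_mul.mp hmem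
      have hfa : φ a < A := (hprest a ha).2
      have hfb : φ b ≤ B := Finset.le_sup' φ hb
      rw [hφ] at hx
      linarith
    calc (p * q).coeff x = (pt * qt + (pt * (q - qt) + (p - pt) * q)).coeff x := by rw [hsplit]
    _ = (pt * qt).coeff x + ((pt * (q - qt)).coeff x + ((p - pt) * q).coeff x) := rfl
    _ = (pt * qt).coeff x := by rw [h1, h2]; ring
  -- pt and qt are nonzero
  obtain ⟨a0, ha0, hAa0⟩ := Finset.exists_mem_eq_sup'
    (Finsupp.support_nonempty_iff.mpr (mt MonoidAlgebra.coeff_eq_zero.mp hp)) φ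
  obtain ⟨b0, hb0, hBb0⟩ := Finset.exists_mem_eq_sup'
    (Finsupp.support_nonempty_iff.mpr (mt MonoidAlgebra.coeff_eq_zero.mp hq)) φ
  have hptne : pt ≠ 0 := by
    exact mt MonoidAlgebra.coeff_eq_zero.mpr (Finsupp.support_nonempty_iff.mp ⟨a0, (hptmem a0).mpr ⟨ha0, hAa0.symm⟩⟩)
  have hqtne : qt ≠ 0 := by
    exact mt MonoidAlgebra.coeff_eq_zero.mpr (Finsupp.support_nonempty_iff.mp ⟨b0, (hqtmem b0).mpr ⟨hb0, hBb0.symm⟩⟩)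
  have htopne : pt * qt ≠ 0 := by
    intro h
    rcases hdom _ _ h with h' | h'
    · exact hptne h'
    · exact hqtne h'
  obtain ⟨x0, hx0⟩ := Finsupp.support_nonempty_iff.mpr (mt MonoidAlgebra.coeff_eq_zero.mp htopne)
  have hx0memmul := MonoidAlgebra.support_coeff_mul_subset pt qt hx0
  have hφx0 : φ x0 = A + B := by
    obtain ⟨a, ha, b, hb, rfl⟩ := Finset.mem_mul.mp hx0memmul
    rw [hφ, ((hptmem a).mp ha).2, ((hqtmem b).mp hb).2]
  have hcoeff : (p * q).coeff x0 ≠ 0 := by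
    rw [key x0 hφx0]
    exact Finsupp.mem_support_iff.mp hx0
  have hpq : p * q ≠ 0 := by
    intro h
    exact hcoeff (by rw [h]; rfl)
  refine ⟨hpq, le_antisymm ?_ ?_⟩
  · apply Finset.sup'_le
    intro y hy
    have hmem := MonoidAlgebra.support_coeff_mul_subset p q hy
    obtain ⟨a, ha, b, hb, rfl⟩ := Finset.mem_mul.mp hmem
    rw [hφ]
    exact add_le_add (Finset.le_sup' φ ha) (Finset.le_sup' φ hb)
  · rw [← hφx0]
    exact Finset.le_sup' φ (Finsupp.mem_support_iff.mpr hcoeff)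

private lemma inf'_eq_neg_sup' {Γ : Type*} (φ : Γ → ℚ) (s : Finset Γ) (H : s.Nonempty) :
    s.inf' H φ = - s.sup' H (fun g => -φ g) := by
  refine le_antisymm ?_ ?_
  · rw [le_neg]
    exact Finset.sup'_le _ _ fun b hb => neg_le_neg (Finset.inf'_le φ hb)
  · exact Finset.le_inf' _ _ fun b hb =>
      neg_le_of_neg_le (Finset.le_sup' (fun g => -φ g) hb)

/-- Section 5 of the paper: for a group `Γ` with `ℤ[Γ]` a domain and a homomorphism
`φ : Γ → ℚ`, the functions `maxdeg_φ`, `mindeg_φ` and `deg_φ = maxdeg_φ - mindeg_φ` on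
nonzero elements of `ℤ[Γ]` are additive under multiplication; in particular the product of
nonzero elements is nonzero and `deg_φ` is a monoid homomorphism `(ℤ[Γ]∖{0}, ·) → (ℚ≥0, +)`. -/
theorem deg_mul_of_groupRing_domain (Γ : Type*) [Group Γ] (φ : Γ → ℚ)
    (hφ : ∀ g h : Γ, φ (g * h) = φ g + φ h)
    (hdom : ∀ p q : MonoidAlgebra ℤ Γ, p * q = 0 → p = 0 ∨ q = 0)
    (p q : MonoidAlgebra ℤ Γ) (hp : p ≠ 0) (hq : q ≠ 0) :
    ∃ hpq : p * q ≠ 0,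
      ((p * q).coeff.support.sup' (Finsupp.support_nonempty_iff.mpr (mt MonoidAlgebra.coeff_eq_zero.mp hpq)) φ =
          p.coeff.support.sup' (Finsupp.support_nonempty_iff.mpr (mt MonoidAlgebra.coeff_eq_zero.mp hp)) φ +
          q.coeff.support.sup' (Finsupp.support_nonempty_iff.mpr (mt MonoidAlgebra.coeff_eq_zero.mp hq)) φ) ∧
      ((p * q).coeff.support.inf' (Finsupp.support_nonempty_iff.mpr (mt MonoidAlgebra.coeff_eq_zero.mp hpq)) φ =
          p.coeff.support.inf' (Finsupp.support_nonempty_iff.mpr (mt MonoidAlgebra.coeff_eq_zero.mp hp)) φ +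
          q.coeff.support.inf' (Finsupp.support_nonempty_iff.mpr (mt MonoidAlgebra.coeff_eq_zero.mp hq)) φ) ∧
      ((p * q).coeff.support.sup' (Finsupp.support_nonempty_iff.mpr (mt MonoidAlgebra.coeff_eq_zero.mp hpq)) φ -
          (p * q).coeff.support.inf' (Finsupp.support_nonempty_iff.mpr (mt MonoidAlgebra.coeff_eq_zero.mp hpq)) φ =
        (p.coeff.support.sup' (Finsupp.support_nonempty_iff.mpr (mt MonoidAlgebra.coeff_eq_zero.mp hp)) φ -
          p.coeff.support.inf' (Finsupp.support_nonempty_iff.mpr (mt MonoidAlgebra.coeff_eq_zero.mp hp)) φ) +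
        (q.coeff.support.sup' (Finsupp.support_nonempty_iff.mpr (mt MonoidAlgebra.coeff_eq_zero.mp hq)) φ -
          q.coeff.support.inf' (Finsupp.support_nonempty_iff.mpr (mt MonoidAlgebra.coeff_eq_zero.mp hq)) φ)) := by
  obtain ⟨hpq, hsup⟩ := sup_aux Γ φ hφ hdom p q hp hq
  have hψ : ∀ g h : Γ, (fun g => -φ g) (g * h) = (fun g => -φ g) g + (fun g => -φ g) h := by
    intro g h
    simp only [hφ]
    ring
  obtain ⟨hpq', hinfneg⟩ := sup_aux Γ (fun g => -φ g) hψ hdom p q hp hq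
  have hinf : (p * q).coeff.support.inf' (Finsupp.support_nonempty_iff.mpr (mt MonoidAlgebra.coeff_eq_zero.mp hpq)) φ =
      p.coeff.support.inf' (Finsupp.support_nonempty_iff.mpr (mt MonoidAlgebra.coeff_eq_zero.mp hp)) φ +
      q.coeff.support.inf' (Finsupp.support_nonempty_iff.mpr (mt MonoidAlgebra.coeff_eq_zero.mp hq)) φ := by
    rw [inf'_eq_neg_sup', inf'_eq_neg_sup', inf'_eq_neg_sup', hinfneg]
    ring
  exact ⟨hpq, hsup, hinf, by rw [hsup, hinf]; ring⟩
end

section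
/- Let K be a field, let k, l ≥ 0, let A and B be k×(k+l) matrices over K and let C be an l×(k+l) matrix over K. Let M be the (k+l)×(k+l) matrix over the polynomial ring K[X] whose first k rows are the rows of A + X·B and whose last l rows are the rows of C. Assume that det M ≠ 0 and that natDegree(det M) − (the multiplicity of 0 as a root of det M) = k. Then the (k+l)×(k+l) matrix over K obtained by stacking A on top of C is invertible, and the (k+l)×(k+l) matrix over K obtained by stacking B on top of C is invertible. -/
open Polynomial Matrix

private lemma coeff_prod_sum' {ι R : Type*} [CommSemiring R] (s : Finset ι) (f : ι → R[X])
    (d : ι → ℕ) (h : ∀ i ∈ s, (f i).natDegree ≤ d i) :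
    (∏ i ∈ s, f i).coeff (∑ i ∈ s, d i) = ∏ i ∈ s, (f i).coeff (d i) := by
  induction s using Finset.cons_induction with
  | empty => simp
  | cons a s ha ih =>
    rw [Finset.prod_cons, Finset.sum_cons, Finset.prod_cons,
      coeff_mul_add_eq_of_natDegree_le (h a (Finset.mem_cons_self a s))
        ((natDegree_prod_le _ _).trans
          (Finset.sum_le_sum fun i hi => h i (Finset.mem_cons_of_mem hi))),
      ih fun i hi => h i (Finset.mem_cons_of_mem hi)]

/-- Lemma 6.3 of the paper in the case of a commutative field `K`.  Let `A`, `B` be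
`k × (k+l)` matrices and `C` an `l × (k+l)` matrix over `K`, and let `M` be the square
matrix over `K[X]` whose first `k` rows are the rows of `A + X·B` and whose last `l` rows
are the rows of `C`.  If `det M ≠ 0` and the spread `natDegree (det M) − rootMultiplicity 0
(det M)` equals `k`, then the matrices `(A; C)` and `(B; C)` are invertible over `K`. -/
theorem stack_invertible_of_det_spread (K : Type*) [Field K] (k l : ℕ)
    (A B : Matrix (Fin k) (Fin k ⊕ Fin l) K) (C : Matrix (Fin l) (Fin k ⊕ Fin l) K)
    (M : Matrix (Fin k ⊕ Fin l) (Fin k ⊕ Fin l) (Polynomial K))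
    (hM : M = Matrix.fromRows
        (Matrix.of fun i j => Polynomial.C (A i j) + Polynomial.X * Polynomial.C (B i j))
        (C.map Polynomial.C))
    (hne : M.det ≠ 0)
    (hdeg : M.det.natDegree - Polynomial.rootMultiplicity 0 M.det = k) :
    (∃ D : Matrix (Fin k ⊕ Fin l) (Fin k ⊕ Fin l) K,
        Matrix.fromRows A C * D = 1 ∧ D * Matrix.fromRows A C = 1) ∧
    (∃ D : Matrix (Fin k ⊕ Fin l) (Fin k ⊕ Fin l) K,
        Matrix.fromRows B C * D = 1 ∧ D * Matrix.fromRows B C = 1) := by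
  classical
  set d : Fin k ⊕ Fin l → ℕ := Sum.elim (fun _ => 1) (fun _ => 0) with hd
  have hentry : ∀ i j, (M i j).natDegree ≤ d i := by
    rintro (i | i) j
    · rw [hM]
      simp only [fromRows_apply_inl, Matrix.of_apply, hd, Sum.elim_inl]
      compute_degree
    · rw [hM]
      simp [hd]
  have hsum : ∀ σ : Equiv.Perm (Fin k ⊕ Fin l), ∑ i, d (σ i) = k := by
    intro σ
    rw [Equiv.sum_comp σ d]
    simp [hd, Fintype.sum_sum_type]
  -- natDegree bound
  have hdegle : M.det.natDegree ≤ k := by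
    rw [Matrix.det_apply]
    refine natDegree_sum_le_of_forall_le _ _ fun σ _ => ?_
    rw [Units.smul_def, zsmul_eq_mul]
    refine natDegree_mul_le.trans ?_
    rw [natDegree_intCast, zero_add]
    refine (natDegree_prod_le _ _).trans ?_
    exact (Finset.sum_le_sum fun i _ => hentry (σ i) i).trans (le_of_eq (hsum σ))
  have hmult : rootMultiplicity 0 M.det ≤ M.det.natDegree := by
    have h1 := Polynomial.pow_rootMultiplicity_dvd M.det 0
    have h2 := Polynomial.natDegree_le_of_dvd h1 hne
    simpa using h2
  have hnd : M.det.natDegree = k := le_antisymm hdegle (by omega)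
  have hm0 : rootMultiplicity 0 M.det = 0 := by omega
  -- coeff 0 = det (A; C)
  have h0 : M.det.coeff 0 = (Matrix.fromRows A C).det := by
    rw [Polynomial.coeff_zero_eq_eval_zero]
    have := RingHom.map_det (Polynomial.evalRingHom (0 : K)) M
    rw [show (Polynomial.evalRingHom (0 : K)) M.det = Polynomial.eval 0 M.det from rfl] at this
    rw [this]
    congr 1
    rw [hM]
    ext (i | i) j <;> simp
  -- coeff k = det (B; C)
  have hk : M.det.coeff k = (Matrix.fromRows B C).det := by
    rw [Matrix.det_apply, Matrix.det_apply, Polynomial.finset_sum_coeff]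
    refine Finset.sum_congr rfl fun σ _ => ?_
    have key := coeff_prod_sum' Finset.univ (fun i => M (σ i) i) (fun i => d (σ i))
      fun i _ => hentry (σ i) i
    rw [hsum σ] at key
    rw [Units.smul_def, Units.smul_def, zsmul_eq_mul, zsmul_eq_mul,
      Polynomial.coeff_intCast_mul, key]
    congr 1
    refine Finset.prod_congr rfl fun i _ => ?_
    show (M (σ i) i).coeff (d (σ i)) = _
    rcases h : σ i with j' | j'
    · rw [hM]
      simp [hd, coeff_X_mul]
    · rw [hM]
      simp [hd]
  -- nonvanishing
  have hA : (Matrix.fromRows A C).det ≠ 0 := by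
    rw [← h0]
    intro h
    have : Polynomial.IsRoot M.det 0 := by
      rwa [Polynomial.IsRoot, ← Polynomial.coeff_zero_eq_eval_zero]
    have := (Polynomial.rootMultiplicity_pos hne).mpr this
    omega
  have hB : (Matrix.fromRows B C).det ≠ 0 := by
    have := Polynomial.leadingCoeff_ne_zero.mpr hne
    rw [Polynomial.leadingCoeff] at this
    rw [hnd, hk] at this
    exact this
  constructor
  · exact ⟨(Matrix.fromRows A C)⁻¹,
      Matrix.mul_nonsing_inv _ (isUnit_iff_ne_zero.mpr hA),
      Matrix.nonsing_inv_mul _ (isUnit_iff_ne_zero.mpr hA)⟩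
  · exact ⟨(Matrix.fromRows B C)⁻¹,
      Matrix.mul_nonsing_inv _ (isUnit_iff_ne_zero.mpr hB),
      Matrix.nonsing_inv_mul _ (isUnit_iff_ne_zero.mpr hB)⟩
end
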